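/- Let A = diag(a₁, …, a_k) be an invertible diagonal matrix, let 𝟙 ∈ ℝ^k be the all-ones column vector, let a = (a₁⁻¹, …, a_k⁻¹)ᵀ, and let M ∈ ℝ^{k×k} satisfy M = A⁻¹MA⁻ᵀ + 𝟙𝟙ᵀ. Then for every real β and every diagonal matrix D ∈ ℝ^{k×k}, the matrix J̃ = D((1 − β)M − 𝟙𝟙ᵀ)D satisfies the Lyapunov equation J̃ = A⁻¹J̃A⁻ᵀ + D(aaᵀ − β𝟙𝟙ᵀ)D. -/
import Mathlib


open Matrix

/-- The all-ones column vector in `ℝ^{k×1}`. -/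
def onesCol (k : ℕ) : Matrix (Fin k) (Fin 1) ℝ := Matrix.of fun _ _ => (1 : ℝ)

/-- The column vector `a = (a₁⁻¹, …, a_k⁻¹)ᵀ`. -/
noncomputable def invCol {k : ℕ} (a : Fin k → ℝ) : Matrix (Fin k) (Fin 1) ℝ :=
  Matrix.of fun j _ => (a j)⁻¹

/-- If `A = diag a` is invertible and `M = A⁻¹MA⁻ᵀ + 𝟙𝟙ᵀ`, then for every `β ∈ ℝ` and
every diagonal `D = diag d`, the matrix `J̃ = D((1−β)M − 𝟙𝟙ᵀ)D` satisfies
`J̃ = A⁻¹ J̃ A⁻ᵀ + D(aaᵀ − β 𝟙𝟙ᵀ)D` where `a = (a₁⁻¹, …, a_k⁻¹)ᵀ`. -/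
theorem stmt8 {k : ℕ} (a : Fin k → ℝ) (ha : ∀ j, a j ≠ 0)
    (M : Matrix (Fin k) (Fin k) ℝ)
    (hM : M = (diagonal a)⁻¹ * M * ((diagonal a)⁻¹)ᵀ + onesCol k * (onesCol k)ᵀ)
    (β : ℝ) (d : Fin k → ℝ) :
    diagonal d * ((1 - β) • M - onesCol k * (onesCol k)ᵀ) * diagonal d
      = (diagonal a)⁻¹
          * (diagonal d * ((1 - β) • M - onesCol k * (onesCol k)ᵀ) * diagonal d)
          * ((diagonal a)⁻¹)ᵀ
        + diagonal d * (invCol a * (invCol a)ᵀ - β • (onesCol k * (onesCol k)ᵀ))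
          * diagonal d := by
  have hinv : (diagonal a)⁻¹ = diagonal (fun j => (a j)⁻¹) := by
    apply Matrix.inv_eq_right_inv
    rw [diagonal_mul_diagonal, ← Matrix.diagonal_one]
    exact congrArg diagonal (funext fun i => mul_inv_cancel₀ (ha i))
  rw [hinv, diagonal_transpose] at hM ⊢
  ext i j
  have h := congrFun (congrFun hM i) j
  simp only [Matrix.add_apply, Matrix.sub_apply, Matrix.smul_apply, Matrix.mul_apply,
    diagonal_mul, mul_diagonal, Matrix.diagonal_apply, onesCol, invCol, Matrix.of_apply,
    Matrix.transpose_apply, Fin.sum_univ_one, smul_eq_mul, Finset.sum_ite_eq, Finset.sum_ite_eq',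
    Finset.mem_univ, if_true, ite_mul, mul_ite, zero_mul, mul_zero] at h ⊢
  linear_combination (d i * d j * (1 - β)) * h
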